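/- Let D ⊆ ℕ be infinite, n₀ ∈ D, and let f, g : D → ℝ satisfy f(n) ≥ g(n) for all n ∈ D with n ≥ n₀, and g(n)/n → ∞ as n → ∞ along D. Then H̃_f is infinite, and for every real A there exists a > A such that the function x ↦ f(x) − a·x attains its minimum on D. -/
import Mathlib

/-- `H̃_f`: points of `D ⊆ ℕ` at which `f(x) − a·x` attains its minimum on `D` for some `a`. -/
def Htilde (D : Set ℕ) (f : ℕ → ℝ) : Set ℕ :=
  {m | m ∈ D ∧ ∃ a : ℝ, ∀ x ∈ D, f m - a * m ≤ f x - a * x}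

/-- For every slope `a`, the function `x ↦ f x - a x` attains a minimum on `D`. -/
lemma exists_min_aux (D : Set ℕ)
    (n₀ : ℕ) (hn₀ : n₀ ∈ D) (f g : ℕ → ℝ)
    (hfg : ∀ n ∈ D, n₀ ≤ n → g n ≤ f n)
    (hg : Filter.Tendsto (fun n : ℕ => g n / n)
      (Filter.atTop ⊓ Filter.principal D) Filter.atTop) (a : ℝ) :
    ∃ m ∈ D, ∀ x ∈ D, f m - a * m ≤ f x - a * x := by
  set C := f n₀ - a * n₀ with hC
  have hev : ∀ᶠ n : ℕ in Filter.atTop ⊓ Filter.principal D,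
      |C| + a + 1 ≤ g n / n := hg.eventually_ge_atTop _
  rw [Filter.eventually_inf_principal] at hev
  rw [Filter.eventually_atTop] at hev
  obtain ⟨N, hN⟩ := hev
  -- for large n in D, f n - a n > C
  have key : ∀ n ∈ D, max (max N n₀) 1 ≤ n → C < f n - a * n := by
    intro n hnD hn
    have hn1 : (1 : ℝ) ≤ (n : ℝ) := by
      have : 1 ≤ n := le_trans (le_max_right _ 1) hn
      exact_mod_cast this
    have hdiv : |C| + a + 1 ≤ g n / n :=
      hN n (le_trans (le_trans (le_max_left N n₀) (le_max_left _ 1)) hn) hnD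
    have hgn : (|C| + a + 1) * n ≤ g n := by
      have hnpos : (0 : ℝ) < n := lt_of_lt_of_le one_pos hn1
      calc (|C| + a + 1) * n ≤ (g n / n) * n := by
            exact mul_le_mul_of_nonneg_right hdiv (le_of_lt hnpos)
        _ = g n := div_mul_cancel₀ _ (ne_of_gt hnpos)
    have hfn : g n ≤ f n :=
      hfg n hnD (le_trans (le_trans (le_max_right N n₀) (le_max_left _ 1)) hn)
    have habs : C ≤ |C| := le_abs_self C
    have habs0 : (0 : ℝ) ≤ |C| := abs_nonneg C
    nlinarith [mul_le_mul_of_nonneg_right habs0 (sub_nonneg.mpr hn1)]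
  set S : Set ℕ := {x | x ∈ D ∧ f x - a * x ≤ C} with hS
  have hSfin : S.Finite := by
    apply Set.Finite.subset (Set.finite_Iio (max (max N n₀) 1))
    intro x hx
    simp only [Set.mem_Iio]
    by_contra hxge
    push_neg at hxge
    exact absurd hx.2 (not_le.mpr (key x hx.1 hxge))
  have hSne : S.Nonempty := ⟨n₀, hn₀, le_refl _⟩
  obtain ⟨m, hmS, hmin⟩ := Set.exists_min_image S (fun x => f x - a * x) hSfin hSne
  refine ⟨m, hmS.1, fun x hx => ?_⟩
  by_cases h : f x - a * x ≤ C
  · exact hmin x ⟨hx, h⟩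
  · exact le_trans (le_trans (hmin n₀ ⟨hn₀, le_refl _⟩) le_rfl) (le_of_lt (not_le.mp h))

theorem Htilde_infinite_of_superlinear (D : Set ℕ) (hD : D.Infinite)
    (n₀ : ℕ) (hn₀ : n₀ ∈ D) (f g : ℕ → ℝ)
    (hfg : ∀ n ∈ D, n₀ ≤ n → g n ≤ f n)
    (hg : Filter.Tendsto (fun n : ℕ => g n / n)
      (Filter.atTop ⊓ Filter.principal D) Filter.atTop) :
    (Htilde D f).Infinite ∧
      ∀ A : ℝ, ∃ a : ℝ, A < a ∧ ∃ m ∈ D, ∀ x ∈ D, f m - a * m ≤ f x - a * x := by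
  have hmin := exists_min_aux D n₀ hn₀ f g hfg hg
  constructor
  · by_contra hfin
    rw [Set.not_infinite] at hfin
    obtain ⟨m₀, hm₀D, hm₀⟩ := hmin 0
    have hm₀H : m₀ ∈ Htilde D f := ⟨hm₀D, 0, hm₀⟩
    obtain ⟨M, hM⟩ := hfin.bddAbove
    obtain ⟨x, hxD, hxM⟩ := hD.exists_gt M
    -- finite nonempty set of candidates below M
    set S' : Set ℕ := {m | m ∈ D ∧ m ≤ M} with hS'
    have hS'fin : S'.Finite :=
      Set.Finite.subset (Set.finite_Iic M) (fun m hm => hm.2)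
    have hS'ne : S'.Nonempty := ⟨m₀, hm₀D, hM hm₀H⟩
    obtain ⟨m₁, hm₁S, hm₁⟩ := Set.exists_min_image S' f hS'fin hS'ne
    set a : ℝ := max (f x - f m₁) 0 + 1 with ha
    obtain ⟨m, hmD, hm⟩ := hmin a
    have hmH : m ∈ Htilde D f := ⟨hmD, a, hm⟩
    have hmM : m ≤ M := hM hmH
    have hfm : f m₁ ≤ f m := hm₁ m ⟨hmD, hmM⟩
    have hle : f m - a * m ≤ f x - a * x := hm x hxD
    have hxm : (m : ℝ) + 1 ≤ (x : ℝ) := by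
      have : m + 1 ≤ x := lt_of_le_of_lt hmM hxM
      exact_mod_cast this
    have ha1 : f x - f m₁ ≤ a - 1 := by
      simp only [ha]
      nlinarith [le_max_left (f x - f m₁) (0:ℝ)]
    have ha0 : (1 : ℝ) ≤ a := by
      simp only [ha]
      nlinarith [le_max_right (f x - f m₁) (0:ℝ)]
    nlinarith
  · intro A
    obtain ⟨m, hmD, hm⟩ := hmin (A + 1)
    exact ⟨A + 1, lt_add_one A, m, hmD, hm⟩
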